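/- For every F ∈ GL⁺(2), the squared Euclidean (Frobenius) distance of the isochoric part F/(det F)^{1/2} to SO(2) satisfies inf_{R ∈ SO(2)} ‖F/(det F)^{1/2} − R‖² = (√(‖F‖²/det F + 2) − 1)² − 1, and the function W : GL⁺(2) → ℝ defined by W(F) = (√(‖F‖²/det F + 2) − 1)² − 1 is polyconvex on GL⁺(2). -/

import Mathlib

open Matrix Set

noncomputable section

/-- The space of real 2×2 matrices. -/
abbrev Mat2 : Type := Matrix (Fin 2) (Fin 2) ℝ

/-- The special orthogonal group SO(2): orthogonal 2×2 matrices with determinant 1. -/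
def SO2 : Set Mat2 := {Q : Mat2 | Qᵀ * Q = 1 ∧ Q.det = 1}

/-- A function `W` (viewed on GL⁺(2) = {F | 0 < det F}) is polyconvex if there is a
convex function `P : ℝ^{2×2} × ℝ → ℝ ∪ {+∞}` with `W F = P (F, det F)` on GL⁺(2). -/
def Polyconvex (W : Mat2 → ℝ) : Prop :=
  ∃ P : Mat2 × ℝ → EReal,
    (∀ x y : Mat2 × ℝ, ∀ a b : ℝ, 0 ≤ a → 0 ≤ b → a + b = 1 →
      P (a • x + b • y) ≤ (a : EReal) * P x + (b : EReal) * P y) ∧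
    (∀ F : Mat2, 0 < F.det → (W F : EReal) = P (F, F.det))

/-- Rank-one convexity of `W` on GL⁺(2): convexity along rank-one line segments
lying in GL⁺(2). -/
def RankOneConvex (W : Mat2 → ℝ) : Prop :=
  ∀ F : Mat2, 0 < F.det → ∀ ξ η : Fin 2 → ℝ, ∀ θ : ℝ, θ ∈ Set.Icc (0:ℝ) 1 →
    (∀ t ∈ Set.Icc (0:ℝ) 1, 0 < (F + t • vecMulVec ξ η).det) →
    W (F + (1 - θ) • vecMulVec ξ η) ≤ θ * W F + (1 - θ) * W (F + vecMulVec ξ η)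

/-- Objectivity and isotropy: bi-SO(2)-invariance on GL⁺(2). -/
def ObjectiveIsotropic (W : Mat2 → ℝ) : Prop :=
  ∀ F : Mat2, 0 < F.det → ∀ Q₁ Q₂ : Mat2, Q₁ ∈ SO2 → Q₂ ∈ SO2 →
    W (Q₁ * F * Q₂) = W F

/-- Isochoric: invariance under positive scaling on GL⁺(2). -/
def Isochoric (W : Mat2 → ℝ) : Prop :=
  ∀ F : Mat2, 0 < F.det → ∀ a : ℝ, 0 < a → W (a • F) = W F

/-- The 2×2 diagonal matrix diag(a, b). -/
def diag2 (a b : ℝ) : Mat2 := !![a, 0; 0, b]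

/-- The squared Frobenius norm of a 2×2 matrix. -/
def frobSq (F : Mat2) : ℝ := ∑ i, ∑ j, (F i j) ^ 2

/-- The operator norm of `F` induced by the Euclidean norm on ℝ²:
the supremum of ‖F·x‖ over Euclidean-unit vectors x. -/
def opNorm2 (F : Mat2) : ℝ :=
  sSup {r : ℝ | ∃ x : Fin 2 → ℝ, (x 0) ^ 2 + (x 1) ^ 2 = 1 ∧
    r = Real.sqrt ((F.mulVec x 0) ^ 2 + (F.mulVec x 1) ^ 2)}

namespace Stmt19Aux

lemma SO2_entries {R : Mat2} (h : R ∈ SO2) :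
    R 1 1 = R 0 0 ∧ R 0 1 = - R 1 0 ∧ (R 0 0)^2 + (R 1 0)^2 = 1 := by
  obtain ⟨horth, hdet⟩ := h
  rw [Matrix.det_fin_two] at hdet
  have e : ∀ i j, (Rᵀ*R) i j = (1 : Mat2) i j := fun i j => by rw [horth]
  have e00 := e 0 0; have e01 := e 0 1
  simp [Matrix.mul_apply, Fin.sum_univ_two, Matrix.one_apply] at e00 e01
  refine ⟨?_, ?_, by nlinarith [e00]⟩
  · linear_combination -(R 1 1)*e00 + (R 0 0)*hdet + (R 1 0)*e01
  · linear_combination -(R 0 1)*e00 - (R 1 0)*hdet + (R 0 0)*e01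

lemma scalar_val (p q a00 a01 a10 a11 μ : ℝ) (hp : p^2+q^2=1)
    (hs : p*(a00+a11)+q*(a10-a01) = μ)
    (hμ2 : μ^2 = a00^2+a01^2+a10^2+a11^2+2) :
    (a00-p)^2+(a01+q)^2+(a10-q)^2+(a11-p)^2 = μ^2 - 2*μ := by
  linear_combination 2*hp - 2*hs - hμ2

lemma scalar_bound (p q a00 a01 a10 a11 μ : ℝ) (hpq : p^2+q^2 = 1)
    (hdet : a00*a11 - a01*a10 = 1) (hμ0 : 0 ≤ μ)
    (hμ2 : μ^2 = a00^2+a01^2+a10^2+a11^2 + 2) :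
    μ^2 - 2*μ ≤ (a00-p)^2+(a01+q)^2+(a10-q)^2+(a11-p)^2 := by
  have hS : p*(a00+a11)+q*(a10-a01) ≤ μ := by
    nlinarith [sq_nonneg (p*(a10-a01) - q*(a00+a11)),
      sq_nonneg (p*(a00+a11)+q*(a10-a01) + μ),
      sq_nonneg (p*(a00+a11)+q*(a10-a01) - μ)]
  nlinarith [hS, hpq]

lemma pq_exists (t u μ : ℝ) (hμ : 0 < μ) (ht2 : t^2+u^2 = μ^2) :
    ∃ p q : ℝ, p^2+q^2 = 1 ∧ p*t+q*u = μ := by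
  refine ⟨t/μ, u/μ, ?_, ?_⟩
  · field_simp
    linear_combination ht2
  · field_simp
    linear_combination ht2

set_option maxHeartbeats 1000000 in
theorem part1 (F : Mat2) (hd : 0 < F.det) :
    sInf {d : ℝ | ∃ R ∈ SO2, d = frobSq ((Real.sqrt F.det)⁻¹ • F - R)} =
      (Real.sqrt (frobSq F / F.det + 2) - 1) ^ 2 - 1 := by
  obtain ⟨r, hrdef⟩ : ∃ r, r = Real.sqrt F.det := ⟨_, rfl⟩
  obtain ⟨μ, hμdef⟩ : ∃ μ, μ = Real.sqrt (frobSq F / F.det + 2) := ⟨_, rfl⟩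
  rw [← hrdef, ← hμdef]
  have hr : 0 < r := hrdef ▸ Real.sqrt_pos.mpr hd
  have hr2 : r ^ 2 = F.det := hrdef ▸ Real.sq_sqrt hd.le
  have hF : F 0 0 * F 1 1 - F 0 1 * F 1 0 = F.det := (Matrix.det_fin_two F).symm
  have hdetA : (r⁻¹*F 0 0)*(r⁻¹*F 1 1) - (r⁻¹*F 0 1)*(r⁻¹*F 1 0) = 1 := by
    field_simp
    linear_combination hF - hr2
  have hk_eq : frobSq F / F.det = (r⁻¹*F 0 0)^2+(r⁻¹*F 0 1)^2+(r⁻¹*F 1 0)^2+(r⁻¹*F 1 1)^2 := by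
    rw [frobSq]
    simp only [Fin.sum_univ_two]
    rw [← hr2]
    field_simp
    ring
  have hk0 : (0:ℝ) ≤ (r⁻¹*F 0 0)^2+(r⁻¹*F 0 1)^2+(r⁻¹*F 1 0)^2+(r⁻¹*F 1 1)^2 := by positivity
  have hμ2 : μ^2 = (r⁻¹*F 0 0)^2+(r⁻¹*F 0 1)^2+(r⁻¹*F 1 0)^2+(r⁻¹*F 1 1)^2 + 2 := by
    rw [hμdef, Real.sq_sqrt (by rw [hk_eq]; linarith), hk_eq]
  have hμ0 : 0 < μ := hμdef ▸ Real.sqrt_pos.mpr (by rw [hk_eq]; linarith)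
  have ht2 : (r⁻¹*F 0 0+r⁻¹*F 1 1)^2 + (r⁻¹*F 1 0-r⁻¹*F 0 1)^2 = μ^2 := by
    linear_combination 2*hdetA - hμ2
  obtain ⟨p, q, hp, hs⟩ := pq_exists _ _ μ hμ0 ht2
  have hRsSO : (!![p, -q; q, p] : Mat2) ∈ SO2 := by
    have hT : (!![p, -q; q, p] : Mat2)ᵀ = !![p, q; -q, p] := by
      ext i j; fin_cases i <;> fin_cases j <;> simp
    constructor
    · rw [hT, Matrix.mul_fin_two, Matrix.one_fin_two]
      ext i j; fin_cases i <;> fin_cases j <;> simp <;> linarith [hp]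
    · rw [Matrix.det_fin_two_of]; linear_combination hp
  have hval : frobSq (r⁻¹ • F - !![p, -q; q, p]) = μ^2 - 2*μ := by
    have h := scalar_val p q (r⁻¹*F 0 0) (r⁻¹*F 0 1) (r⁻¹*F 1 0) (r⁻¹*F 1 1) μ hp hs hμ2
    rw [frobSq]
    simp only [Fin.sum_univ_two, Matrix.sub_apply, Matrix.smul_apply, smul_eq_mul,
      Matrix.cons_val', Matrix.cons_val_zero, Matrix.cons_val_one, Matrix.head_cons,
      Matrix.empty_val', Matrix.cons_val_fin_one, Matrix.head_fin_const, Matrix.of_apply]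
    linear_combination h
  have hmem : μ^2 - 2*μ ∈ {d : ℝ | ∃ R ∈ SO2, d = frobSq (r⁻¹ • F - R)} :=
    ⟨_, hRsSO, hval.symm⟩
  have hlb : ∀ x ∈ {d : ℝ | ∃ R ∈ SO2, d = frobSq (r⁻¹ • F - R)}, μ^2 - 2*μ ≤ x := by
    rintro x ⟨R, hR, rfl⟩
    obtain ⟨h11, h01, hpq⟩ := SO2_entries hR
    have h := scalar_bound (R 0 0) (R 1 0) (r⁻¹*F 0 0) (r⁻¹*F 0 1) (r⁻¹*F 1 0) (r⁻¹*F 1 1)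
      μ hpq hdetA hμ0.le hμ2
    rw [frobSq]
    simp only [Fin.sum_univ_two, Matrix.sub_apply, Matrix.smul_apply, smul_eq_mul]
    rw [h11, h01]
    exact h.trans (le_of_eq (by ring))
  have hfin : sInf {d : ℝ | ∃ R ∈ SO2, d = frobSq (r⁻¹ • F - R)} = μ^2 - 2*μ :=
    le_antisymm (csInf_le ⟨μ^2-2*μ, hlb⟩ hmem) (le_csInf ⟨_, hmem⟩ hlb)
  rw [hfin]; ring


lemma sqrt_comb (a b t1 u1 t2 u2 : ℝ) (ha : 0 ≤ a) (hb : 0 ≤ b) :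
    Real.sqrt ((a*t1+b*t2)^2+(a*u1+b*u2)^2) ≤
      a*Real.sqrt (t1^2+u1^2) + b*Real.sqrt (t2^2+u2^2) := by
  set m1 := Real.sqrt (t1^2+u1^2) with hm1def
  set m2 := Real.sqrt (t2^2+u2^2) with hm2def
  have hm1 : 0 ≤ m1 := Real.sqrt_nonneg _
  have hm2 : 0 ≤ m2 := Real.sqrt_nonneg _
  have h1 : m1^2 = t1^2+u1^2 := Real.sq_sqrt (by positivity)
  have h2 : m2^2 = t2^2+u2^2 := Real.sq_sqrt (by positivity)
  have cs : t1*t2+u1*u2 ≤ m1*m2 := by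
    nlinarith [sq_nonneg (t1*u2-t2*u1), sq_nonneg (t1*t2+u1*u2 - m1*m2), mul_nonneg hm1 hm2]
  have hprod : 0 ≤ a*b*(m1*m2 - (t1*t2+u1*u2)) :=
    mul_nonneg (mul_nonneg ha hb) (by linarith)
  have key : (a*t1+b*t2)^2+(a*u1+b*u2)^2 ≤ (a*m1+b*m2)^2 := by
    nlinarith [hprod, h1, h2, sq_nonneg a, sq_nonneg b]
  calc Real.sqrt ((a*t1+b*t2)^2+(a*u1+b*u2)^2) ≤ Real.sqrt ((a*m1+b*m2)^2) :=
        Real.sqrt_le_sqrt key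
    _ = a*m1+b*m2 := Real.sqrt_sq (by positivity)

lemma sqrt_concave_comb (a b d1 d2 : ℝ) (ha : 0 ≤ a) (hb : 0 ≤ b) (hab : a+b=1)
    (h1 : 0 ≤ d1) (h2 : 0 ≤ d2) :
    a*Real.sqrt d1 + b*Real.sqrt d2 ≤ Real.sqrt (a*d1+b*d2) := by
  have hs1 : Real.sqrt d1 ^2 = d1 := Real.sq_sqrt h1
  have hs2 : Real.sqrt d2 ^2 = d2 := Real.sq_sqrt h2
  have hb' : b = 1 - a := by linarith
  subst hb'
  have hprod : 0 ≤ a*(1-a)*(Real.sqrt d1 - Real.sqrt d2)^2 := by positivity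
  have key : (a*Real.sqrt d1 + (1-a)*Real.sqrt d2)^2 ≤ a*d1+(1-a)*d2 := by
    nlinarith [hprod, hs1, hs2]
  calc a*Real.sqrt d1 + (1-a)*Real.sqrt d2
      = Real.sqrt ((a*Real.sqrt d1 + (1-a)*Real.sqrt d2)^2) := (Real.sqrt_sq (by positivity)).symm
    _ ≤ Real.sqrt (a*d1+(1-a)*d2) := Real.sqrt_le_sqrt key

lemma quad_over_lin (a b u1 u2 d1 d2 : ℝ) (ha : 0 ≤ a) (hb : 0 ≤ b)
    (h1 : 0 < d1) (h2 : 0 < d2) (hdz : 0 < a*d1+b*d2) :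
    (a*u1+b*u2)^2/(a*d1+b*d2) ≤ a*(u1^2/d1)+b*(u2^2/d2) := by
  rw [div_le_iff₀ hdz]
  set v1 := u1^2/d1 with hv1def
  set v2 := u2^2/d2 with hv2def
  have hv1 : v1*d1 = u1^2 := div_mul_cancel₀ _ h1.ne'
  have hv2 : v2*d2 = u2^2 := div_mul_cancel₀ _ h2.ne'
  have e1 : v1*(d1*d2^2) = u1^2*d2^2 := by rw [show v1*(d1*d2^2) = v1*d1*d2^2 by ring, hv1]
  have e2 : v2*(d2*d1^2) = u2^2*d1^2 := by rw [show v2*(d2*d1^2) = v2*d2*d1^2 by ring, hv2]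
  have h3 : 0 ≤ v1*d2 + v2*d1 - 2*u1*u2 := by
    nlinarith [mul_pos h1 h2, sq_nonneg (u1*d2-u2*d1), e1, e2]
  have hprod : 0 ≤ a*b*(v1*d2 + v2*d1 - 2*u1*u2) := mul_nonneg (mul_nonneg ha hb) h3
  nlinarith [hprod, hv1, hv2, sq_nonneg a, sq_nonneg b]

noncomputable def mfun (F : Mat2) : ℝ := Real.sqrt ((F 0 0 + F 1 1)^2 + (F 1 0 - F 0 1)^2)

noncomputable def Pfun : Mat2 × ℝ → EReal := fun z =>
  if 0 < z.2 then (((max (mfun z.1 - Real.sqrt z.2) 0)^2 / z.2 - 1 : ℝ) : EReal) else ⊤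

lemma Pfun_ne_bot (z : Mat2 × ℝ) : Pfun z ≠ ⊥ := by
  rw [Pfun]
  split
  · exact EReal.coe_ne_bot _
  · exact top_ne_bot

lemma coe_mul_ne_bot (b : ℝ) (hb : 0 < b) (v : EReal) (hv : v ≠ ⊥) : (b:EReal)*v ≠ ⊥ := by
  induction v using EReal.rec with
  | bot => exact absurd rfl hv
  | coe r => rw [← EReal.coe_mul]; exact EReal.coe_ne_bot _
  | top => rw [EReal.coe_mul_top_of_pos hb]; exact top_ne_bot

lemma key_real (a b d1 d2 m1 m2 mz : ℝ) (ha : 0 < a) (hb : 0 < b) (hab : a+b=1)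
    (h1 : 0 < d1) (h2 : 0 < d2) (hmz : mz ≤ a*m1 + b*m2) :
    (max (mz - Real.sqrt (a*d1+b*d2)) 0)^2/(a*d1+b*d2) - 1 ≤
      a*((max (m1 - Real.sqrt d1) 0)^2/d1 - 1) + b*((max (m2 - Real.sqrt d2) 0)^2/d2 - 1) := by
  have hdz : 0 < a*d1+b*d2 := by positivity
  set u1 := max (m1 - Real.sqrt d1) 0 with hu1def
  set u2 := max (m2 - Real.sqrt d2) 0 with hu2def
  set uz := max (mz - Real.sqrt (a*d1+b*d2)) 0 with huzdef
  have hu1 : 0 ≤ u1 := le_max_right _ _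
  have hu2 : 0 ≤ u2 := le_max_right _ _
  have huz : 0 ≤ uz := le_max_right _ _
  have hsq := sqrt_concave_comb a b d1 d2 ha.le hb.le hab h1.le h2.le
  have l1 : a*(m1 - Real.sqrt d1) ≤ a*u1 := mul_le_mul_of_nonneg_left (le_max_left _ _) ha.le
  have l2 : b*(m2 - Real.sqrt d2) ≤ b*u2 := mul_le_mul_of_nonneg_left (le_max_left _ _) hb.le
  have hcomb : uz ≤ a*u1 + b*u2 := by
    apply max_le
    · nlinarith [l1, l2, hsq, hmz]
    · positivity
  have hsq2 : uz^2 ≤ (a*u1+b*u2)^2 := pow_le_pow_left₀ huz hcomb 2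
  have hdiv : uz^2/(a*d1+b*d2) ≤ (a*u1+b*u2)^2/(a*d1+b*d2) := by gcongr
  have hq := quad_over_lin a b u1 u2 d1 d2 ha.le hb.le h1 h2 hdz
  have hfinal : a*(u1^2/d1 - 1) + b*(u2^2/d2 - 1) = a*(u1^2/d1)+b*(u2^2/d2) - 1 := by
    linear_combination -hab
  linarith [hdiv, hq, hfinal]

lemma mfun_comb (X Y : Mat2) (a b : ℝ) (ha : 0 ≤ a) (hb : 0 ≤ b) :
    mfun (a • X + b • Y) ≤ a * mfun X + b * mfun Y := by
  have h := sqrt_comb a b (X 0 0 + X 1 1) (X 1 0 - X 0 1) (Y 0 0 + Y 1 1) (Y 1 0 - Y 0 1) ha hb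
  rw [mfun, mfun, mfun]
  simp only [Matrix.add_apply, Matrix.smul_apply, smul_eq_mul]
  calc Real.sqrt ((a * X 0 0 + b * Y 0 0 + (a * X 1 1 + b * Y 1 1))^2 +
        (a * X 1 0 + b * Y 1 0 - (a * X 0 1 + b * Y 0 1))^2)
      = Real.sqrt ((a*(X 0 0 + X 1 1)+b*(Y 0 0 + Y 1 1))^2 +
        (a*(X 1 0 - X 0 1)+b*(Y 1 0 - Y 0 1))^2) := by ring_nf
    _ ≤ _ := h

lemma Pfun_convex : ∀ x y : Mat2 × ℝ, ∀ a b : ℝ, 0 ≤ a → 0 ≤ b → a + b = 1 →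
    Pfun (a • x + b • y) ≤ (a : EReal) * Pfun x + (b : EReal) * Pfun y := by
  intro x y a b ha hb hab
  rcases eq_or_lt_of_le ha with ha0 | ha'
  · have hb1 : b = 1 := by linarith
    subst hb1
    rw [← ha0]
    simp only [zero_smul, one_smul, zero_add, EReal.coe_zero, EReal.coe_one, zero_mul, one_mul]
    exact le_refl _
  · rcases eq_or_lt_of_le hb with hb0 | hb'
    · have ha1 : a = 1 := by linarith
      subst ha1
      rw [← hb0]
      simp only [zero_smul, one_smul, add_zero, EReal.coe_zero, EReal.coe_one, zero_mul, one_mul]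
      exact le_refl _
    · by_cases hx2 : 0 < x.2
      · by_cases hy2 : 0 < y.2
        · -- main case
          have hz2 : (0:ℝ) < a * x.2 + b * y.2 := by positivity
          have hz2' : (a • x + b • y).2 = a * x.2 + b * y.2 := rfl
          have hz1 : (a • x + b • y).1 = a • x.1 + b • y.1 := rfl
          rw [Pfun, Pfun, Pfun]
          simp only [hz1, hz2', if_pos hx2, if_pos hy2, if_pos hz2]
          rw [← EReal.coe_mul, ← EReal.coe_mul, ← EReal.coe_add, EReal.coe_le_coe_iff]
          have hm := mfun_comb x.1 y.1 a b ha hb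
          have hk := key_real a b x.2 y.2 (mfun x.1) (mfun y.1) (mfun (a • x.1 + b • y.1))
            ha' hb' hab hx2 hy2 hm
          calc (max (mfun (a • x.1 + b • y.1) - Real.sqrt (a * x.2 + b * y.2)) 0)^2 /
                (a * x.2 + b * y.2) - 1
              ≤ a*((max (mfun x.1 - Real.sqrt x.2) 0)^2/x.2 - 1) +
                b*((max (mfun y.1 - Real.sqrt y.2) 0)^2/y.2 - 1) := hk
            _ = _ := by ring
        · have hPy : Pfun y = ⊤ := by rw [Pfun]; simp [hy2]
          rw [hPy, EReal.coe_mul_top_of_pos hb',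
            EReal.add_top_of_ne_bot (coe_mul_ne_bot a ha' _ (Pfun_ne_bot x))]
          exact le_top
      · have hPx : Pfun x = ⊤ := by rw [Pfun]; simp [hx2]
        rw [hPx, EReal.coe_mul_top_of_pos ha',
          EReal.top_add_of_ne_bot (coe_mul_ne_bot b hb' _ (Pfun_ne_bot y))]
        exact le_top

lemma Pfun_repr (F : Mat2) (hd : 0 < F.det) :
    (((Real.sqrt (frobSq F / F.det + 2) - 1) ^ 2 - 1 : ℝ) : EReal) = Pfun (F, F.det) := by
  rw [Pfun]
  simp only [if_pos hd]
  norm_cast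
  have hs0 : 0 ≤ frobSq F := by
    rw [frobSq]; positivity
  have hr : 0 < Real.sqrt F.det := Real.sqrt_pos.mpr hd
  have hr2 : Real.sqrt F.det ^ 2 = F.det := Real.sq_sqrt hd.le
  have hT : (F 0 0 + F 1 1)^2 + (F 1 0 - F 0 1)^2 = frobSq F + 2*F.det := by
    rw [frobSq, Matrix.det_fin_two]
    simp only [Fin.sum_univ_two]
    ring
  have hmdef : mfun F = Real.sqrt (frobSq F + 2*F.det) := by rw [mfun, hT]
  have hm0 : 0 ≤ mfun F := Real.sqrt_nonneg _
  have hm2 : mfun F ^ 2 = frobSq F + 2*F.det := by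
    rw [hmdef]; exact Real.sq_sqrt (by linarith)
  have hge : Real.sqrt F.det ≤ mfun F := by
    rw [hmdef]; exact Real.sqrt_le_sqrt (by linarith)
  have hmax : max (mfun F - Real.sqrt F.det) 0 = mfun F - Real.sqrt F.det :=
    max_eq_left (by linarith)
  have hdiv : frobSq F / F.det + 2 = mfun F ^2 / F.det := by
    rw [hm2]; field_simp
  have hsq : Real.sqrt (frobSq F / F.det + 2) = mfun F / Real.sqrt F.det := by
    rw [hdiv, Real.sqrt_div (sq_nonneg _), Real.sqrt_sq hm0]
  rw [hsq, hmax]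
  field_simp
  rw [hr2]; ring

end Stmt19Aux

/-- for `F ∈ GL⁺(2)`, the squared Frobenius distance of the isochoric
part `F/√(det F)` to SO(2) equals `(√(‖F‖²/det F + 2) − 1)² − 1`, and this defines a
polyconvex function on GL⁺(2). -/
theorem isochoric_distance_to_SO2_and_polyconvex :
    (∀ F : Mat2, 0 < F.det →
      sInf {d : ℝ | ∃ R ∈ SO2, d = frobSq ((Real.sqrt F.det)⁻¹ • F - R)} =
        (Real.sqrt (frobSq F / F.det + 2) - 1) ^ 2 - 1) ∧
    Polyconvex (fun F => (Real.sqrt (frobSq F / F.det + 2) - 1) ^ 2 - 1) := by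
  constructor
  · exact fun F hd => Stmt19Aux.part1 F hd
  · exact ⟨Stmt19Aux.Pfun, Stmt19Aux.Pfun_convex, fun F hd => Stmt19Aux.Pfun_repr F hd⟩
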